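/- Let n ≥ 1 be an integer and for ν ∈ ℝ define ψ_ν : {(x₀,x₁) ∈ ℝ × ℝ^{n−1} : x₀ > 0} → ℝ by ψ_ν(x₀,x₁) = ( 4x₀ / ((1+x₀)² + ‖x₁‖²) )^{ν}. Then for every ν ∈ ℝ and every point (x₀,x₁) with x₀ > 0, the following Bernstein identity holds: ν(ν − n + 1) ψ_ν(x) − x₀² ( ∂²ψ_ν/∂x₀² + Δ_{x₁} ψ_ν )(x) + (n−2) x₀ (∂ψ_ν/∂x₀)(x) = ν(ν − n/2 + 1) ψ_{ν+1}(x), where Δ_{x₁} denotes the Euclidean Laplacian in the variables x₁ ∈ ℝ^{n−1}. -/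

import Mathlib

private lemma rpow_red {x : ℝ} (hx : 0 < x) (p : ℝ) : x ^ (p - 1) = x ^ p / x := by
  rw [Real.rpow_sub hx, Real.rpow_one]

set_option maxHeartbeats 1000000 in
/-- The Bernstein identity `D(ν) B_ν = b(ν) B_{ν+1}` for the Berezin function
`ψ_ν(x₀,x₁) = (4x₀/((1+x₀)²+‖x₁‖²))^ν` on the half-space model of real hyperbolic
`n`-space: `ν(ν−n+1) ψ_ν − x₀²(∂²ψ_ν/∂x₀² + Δ_{x₁}ψ_ν) + (n−2)x₀ ∂ψ_ν/∂x₀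
 = ν(ν−n/2+1) ψ_{ν+1}`. -/
theorem bernstein_identity_hyperbolic (n : ℕ) (hn : 1 ≤ n) (ν : ℝ)
    (ψ : ℝ → ℝ → EuclideanSpace ℝ (Fin (n - 1)) → ℝ)
    (hψ : ∀ (μ x₀ : ℝ) (x₁ : EuclideanSpace ℝ (Fin (n - 1))),
      ψ μ x₀ x₁ = (4 * x₀ / ((1 + x₀) ^ 2 + ‖x₁‖ ^ 2)) ^ μ) :
    ∀ (x₀ : ℝ), 0 < x₀ → ∀ (x₁ : EuclideanSpace ℝ (Fin (n - 1))),
      ν * (ν - n + 1) * ψ ν x₀ x₁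
        - x₀ ^ 2 * (deriv (deriv (fun t : ℝ => ψ ν t x₁)) x₀
            + ∑ i : Fin (n - 1),
                deriv (deriv (fun t : ℝ =>
                  ψ ν x₀ (x₁ + t • EuclideanSpace.single i (1 : ℝ)))) 0)
        + ((n : ℝ) - 2) * x₀ * deriv (fun t : ℝ => ψ ν t x₁) x₀
      = ν * (ν - (n : ℝ) / 2 + 1) * ψ (ν + 1) x₀ x₁ := by
  intro x₀ hx₀ x₁
  set c : ℝ := ‖x₁‖ ^ 2 with hc
  have hc0 : 0 ≤ c := sq_nonneg _
  have hBpos : ∀ t : ℝ, 0 < t → 0 < (1 + t) ^ 2 + c := by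
    intro t ht; positivity
  have hQpos : 0 < (1 + x₀) ^ 2 + c := hBpos x₀ hx₀
  -- ψ in product form
  have hψF : ∀ μ t : ℝ, 0 < t →
      ψ μ t x₁ = (4 * t) ^ μ * ((1 + t) ^ 2 + c) ^ (-μ) := by
    intro μ t ht
    rw [hψ, Real.div_rpow (by positivity) (le_of_lt (hBpos t ht)),
      Real.rpow_neg (le_of_lt (hBpos t ht)), div_eq_mul_inv]
  -- first derivative in x₀ direction, for every t > 0
  have hd1 : ∀ t : ℝ, 0 < t → HasDerivAt
      (fun t : ℝ => (4 * t) ^ ν * ((1 + t) ^ 2 + c) ^ (-ν))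
      (4 * ν * (4 * t) ^ (ν - 1) * ((1 + t) ^ 2 + c) ^ (-ν)
        + (4 * t) ^ ν * (2 * (1 + t) * -ν * ((1 + t) ^ 2 + c) ^ (-ν - 1))) t := by
    intro t ht
    have h1 : HasDerivAt (fun t : ℝ => 4 * t) 4 t := by
      simpa using (hasDerivAt_id t).const_mul (4 : ℝ)
    have h2 : HasDerivAt (fun t : ℝ => (4 * t) ^ ν) (4 * ν * (4 * t) ^ (ν - 1)) t :=
      h1.rpow_const (Or.inl (by positivity))
    have h3 : HasDerivAt (fun t : ℝ => (1 + t) ^ 2 + c) (2 * (1 + t)) t := by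
      have := (((hasDerivAt_id t).const_add (1 : ℝ)).pow 2).add_const c
      refine this.congr_deriv ?_
      simp only [id_eq]; push_cast; ring
    have h4 : HasDerivAt (fun t : ℝ => ((1 + t) ^ 2 + c) ^ (-ν))
        (2 * (1 + t) * -ν * ((1 + t) ^ 2 + c) ^ (-ν - 1)) t :=
      h3.rpow_const (Or.inl (hBpos t ht).ne')
    exact h2.mul h4
  have hev : (fun t : ℝ => ψ ν t x₁) =ᶠ[nhds x₀]
      (fun t : ℝ => (4 * t) ^ ν * ((1 + t) ^ 2 + c) ^ (-ν)) :=
    (eventually_gt_nhds hx₀).mono fun t ht => hψF ν t ht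
  have hD1 : deriv (fun t : ℝ => ψ ν t x₁) x₀
      = 4 * ν * (4 * x₀) ^ (ν - 1) * ((1 + x₀) ^ 2 + c) ^ (-ν)
        + (4 * x₀) ^ ν * (2 * (1 + x₀) * -ν * ((1 + x₀) ^ 2 + c) ^ (-ν - 1)) :=
    (((hd1 x₀ hx₀).congr_of_eventuallyEq hev)).deriv
  -- the derivative agrees with the closed form in a neighborhood
  have hevd : deriv (fun t : ℝ => ψ ν t x₁) =ᶠ[nhds x₀]
      (fun t : ℝ => 4 * ν * (4 * t) ^ (ν - 1) * ((1 + t) ^ 2 + c) ^ (-ν)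
        + (4 * t) ^ ν * (2 * (1 + t) * -ν * ((1 + t) ^ 2 + c) ^ (-ν - 1))) := by
    filter_upwards [eventually_gt_nhds hx₀] with t ht
    have hev' : (fun t : ℝ => ψ ν t x₁) =ᶠ[nhds t]
        (fun t : ℝ => (4 * t) ^ ν * ((1 + t) ^ 2 + c) ^ (-ν)) :=
      (eventually_gt_nhds ht).mono fun s hs => hψF ν s hs
    exact (((hd1 t ht).congr_of_eventuallyEq hev')).deriv
  -- second derivative in x₀ direction
  have h1 : HasDerivAt (fun t : ℝ => 4 * t) 4 x₀ := by
    simpa using (hasDerivAt_id x₀).const_mul (4 : ℝ)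
  have h3 : HasDerivAt (fun t : ℝ => (1 + t) ^ 2 + c) (2 * (1 + x₀)) x₀ := by
    have := (((hasDerivAt_id x₀).const_add (1 : ℝ)).pow 2).add_const c
    refine this.congr_deriv ?_
    simp only [id_eq]; push_cast; ring
  have h2x : HasDerivAt (fun t : ℝ => (4 * t) ^ ν) (4 * ν * (4 * x₀) ^ (ν - 1)) x₀ :=
    h1.rpow_const (Or.inl (by positivity))
  have h4x : HasDerivAt (fun t : ℝ => ((1 + t) ^ 2 + c) ^ (-ν))
      (2 * (1 + x₀) * -ν * ((1 + x₀) ^ 2 + c) ^ (-ν - 1)) x₀ :=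
    h3.rpow_const (Or.inl hQpos.ne')
  have hA : HasDerivAt (fun t : ℝ => 4 * ν * (4 * t) ^ (ν - 1))
      (4 * ν * (4 * (ν - 1) * (4 * x₀) ^ (ν - 1 - 1))) x₀ :=
    (h1.rpow_const (Or.inl (by positivity))).const_mul (4 * ν)
  have hu : HasDerivAt (fun t : ℝ => 2 * (1 + t) * -ν) (2 * -ν) x₀ := by
    have := (((hasDerivAt_id x₀).const_add (1 : ℝ)).const_mul (2 : ℝ)).mul_const (-ν)
    refine this.congr_deriv ?_; ring
  have hv : HasDerivAt (fun t : ℝ => ((1 + t) ^ 2 + c) ^ (-ν - 1))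
      (2 * (1 + x₀) * (-ν - 1) * ((1 + x₀) ^ 2 + c) ^ (-ν - 1 - 1)) x₀ :=
    h3.rpow_const (Or.inl hQpos.ne')
  have hd2 := (hA.mul h4x).add (h2x.mul (hu.mul hv))
  have hD2 : deriv (deriv (fun t : ℝ => ψ ν t x₁)) x₀
      = 4 * ν * (4 * (ν - 1) * (4 * x₀) ^ (ν - 1 - 1)) * ((1 + x₀) ^ 2 + c) ^ (-ν)
          + 4 * ν * (4 * x₀) ^ (ν - 1)
            * (2 * (1 + x₀) * -ν * ((1 + x₀) ^ 2 + c) ^ (-ν - 1))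
        + (4 * ν * (4 * x₀) ^ (ν - 1)
            * (2 * (1 + x₀) * -ν * ((1 + x₀) ^ 2 + c) ^ (-ν - 1))
          + (4 * x₀) ^ ν * (2 * -ν * ((1 + x₀) ^ 2 + c) ^ (-ν - 1)
            + 2 * (1 + x₀) * -ν
              * (2 * (1 + x₀) * (-ν - 1) * ((1 + x₀) ^ 2 + c) ^ (-ν - 1 - 1)))) :=
    hevd.deriv_eq.trans hd2.deriv
  -- Laplacian in the x₁ directions
  have key : ∀ i : Fin (n - 1),
      deriv (deriv (fun t : ℝ =>
          ψ ν x₀ (x₁ + t • EuclideanSpace.single i (1 : ℝ)))) 0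
        = (4 * x₀) ^ ν * (2 * -ν * ((1 + x₀) ^ 2 + c) ^ (-ν - 1))
          + (4 * x₀) ^ ν * (4 * ν * (ν + 1) * ((1 + x₀) ^ 2 + c) ^ (-ν - 1 - 1))
            * (x₁ i) ^ 2 := by
    intro i
    set a : ℝ := x₁ i with ha
    have hnorm : ∀ t : ℝ, ‖x₁ + t • EuclideanSpace.single i (1 : ℝ)‖ ^ 2
        = c + 2 * a * t + t ^ 2 := by
      intro t
      rw [norm_add_sq_real, real_inner_smul_right, EuclideanSpace.inner_single_right,
        norm_smul, EuclideanSpace.norm_single]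
      simp [Real.norm_eq_abs, mul_pow, sq_abs]
      ring
    have ha2 : a ^ 2 ≤ c := by
      have h := abs_real_inner_le_norm x₁ (EuclideanSpace.single i (1 : ℝ))
      rw [EuclideanSpace.inner_single_right, EuclideanSpace.norm_single] at h
      simp only [norm_one, mul_one] at h
      have : |a| ≤ ‖x₁‖ := by simpa [ha] using h
      calc a ^ 2 = |a| ^ 2 := (sq_abs a).symm
        _ ≤ ‖x₁‖ ^ 2 := by exact pow_le_pow_left₀ (abs_nonneg a) this 2
    have hDpos : ∀ t : ℝ, 0 < (1 + x₀) ^ 2 + c + 2 * a * t + t ^ 2 := by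
      intro t
      nlinarith [sq_nonneg (a + t), sq_nonneg (1 + x₀), hx₀, ha2]
    have hfun : (fun t : ℝ => ψ ν x₀ (x₁ + t • EuclideanSpace.single i (1 : ℝ)))
        = fun t : ℝ => (4 * x₀) ^ ν * ((1 + x₀) ^ 2 + c + 2 * a * t + t ^ 2) ^ (-ν) := by
      funext t
      rw [hψ, hnorm t,
        show (1 + x₀) ^ 2 + (c + 2 * a * t + t ^ 2)
          = (1 + x₀) ^ 2 + c + 2 * a * t + t ^ 2 from by ring,
        Real.div_rpow (by positivity) (le_of_lt (hDpos t)),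
        Real.rpow_neg (le_of_lt (hDpos t)), div_eq_mul_inv]
    have hD : ∀ t : ℝ, HasDerivAt
        (fun t : ℝ => (1 + x₀) ^ 2 + c + 2 * a * t + t ^ 2) (2 * a + 2 * t) t := by
      intro t
      have := ((((hasDerivAt_id t).const_mul (2 * a)).const_add
        ((1 + x₀) ^ 2 + c)).add (hasDerivAt_pow 2 t))
      refine this.congr_deriv ?_
      push_cast; ring
    have hg1 : ∀ t : ℝ, HasDerivAt
        (fun t : ℝ => (4 * x₀) ^ ν * ((1 + x₀) ^ 2 + c + 2 * a * t + t ^ 2) ^ (-ν))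
        ((4 * x₀) ^ ν * ((2 * a + 2 * t) * -ν
          * ((1 + x₀) ^ 2 + c + 2 * a * t + t ^ 2) ^ (-ν - 1))) t := by
      intro t
      exact ((hD t).rpow_const (Or.inl (hDpos t).ne')).const_mul _
    rw [hfun]
    have hder1 : deriv (fun t : ℝ =>
        (4 * x₀) ^ ν * ((1 + x₀) ^ 2 + c + 2 * a * t + t ^ 2) ^ (-ν))
        = fun t : ℝ => (4 * x₀) ^ ν * ((2 * a + 2 * t) * -ν
          * ((1 + x₀) ^ 2 + c + 2 * a * t + t ^ 2) ^ (-ν - 1)) :=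
      funext fun t => (hg1 t).deriv
    rw [hder1]
    -- second derivative at 0
    have hu2 : HasDerivAt (fun t : ℝ => (2 * a + 2 * t) * -ν) (2 * -ν) 0 := by
      have := (((hasDerivAt_id (0 : ℝ)).const_mul (2 : ℝ)).const_add (2 * a)).mul_const (-ν)
      refine this.congr_deriv ?_; ring
    have hv2 : HasDerivAt
        (fun t : ℝ => ((1 + x₀) ^ 2 + c + 2 * a * t + t ^ 2) ^ (-ν - 1))
        ((2 * a + 2 * 0) * (-ν - 1)
          * ((1 + x₀) ^ 2 + c + 2 * a * 0 + 0 ^ 2) ^ (-ν - 1 - 1)) 0 :=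
      (hD 0).rpow_const (Or.inl (hDpos 0).ne')
    have hgg := ((hu2.mul hv2).const_mul ((4 * x₀) ^ ν)).deriv
    erw [hgg]
    rw [show (1 + x₀) ^ 2 + c + 2 * a * 0 + 0 ^ 2 = (1 + x₀) ^ 2 + c from by ring]
    ring
  -- sum over the x₁ directions
  have hsumsq : ∑ i : Fin (n - 1), (x₁ i) ^ 2 = c := by
    rw [hc, EuclideanSpace.norm_eq, Real.sq_sqrt (by positivity)]
    simp [Real.norm_eq_abs, sq_abs]
  have hcard : ((Fintype.card (Fin (n - 1)) : ℝ)) = (n : ℝ) - 1 := by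
    rw [Fintype.card_fin]
    push_cast [Nat.cast_sub hn]
    ring
  have hSum : ∑ i : Fin (n - 1),
      deriv (deriv (fun t : ℝ =>
        ψ ν x₀ (x₁ + t • EuclideanSpace.single i (1 : ℝ)))) 0
      = ((n : ℝ) - 1) * ((4 * x₀) ^ ν * (2 * -ν * ((1 + x₀) ^ 2 + c) ^ (-ν - 1)))
        + (4 * x₀) ^ ν * (4 * ν * (ν + 1) * ((1 + x₀) ^ 2 + c) ^ (-ν - 1 - 1)) * c := by
    rw [Finset.sum_congr rfl fun i _ => key i, Finset.sum_add_distrib,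
      Finset.sum_const, ← Finset.mul_sum]
    rw [hsumsq]
    rw [Finset.card_univ, nsmul_eq_mul, hcard]
  -- assemble
  rw [hD1, hD2, hSum, hψF ν x₀ hx₀, hψF (ν + 1) x₀ hx₀]
  have h4x0 : (0:ℝ) < 4 * x₀ := by positivity
  rw [show (ν - 1 - 1 : ℝ) = (ν - 1) - 1 from rfl]
  rw [Real.rpow_add_one h4x0.ne' ν,
    show (-(ν+1) : ℝ) = -ν - 1 from by ring,
    rpow_red h4x0 (ν - 1), rpow_red h4x0 ν,
    rpow_red hQpos (-ν - 1), rpow_red hQpos (-ν)]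
  have hx : (x₀ : ℝ) ≠ 0 := hx₀.ne'
  have hQ : ((1 + x₀) ^ 2 + c) ≠ 0 := hQpos.ne'
  generalize (4 * x₀ : ℝ) ^ ν = P
  generalize ((1 + x₀) ^ 2 + c : ℝ) ^ (-ν) = R
  field_simp
  ring
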